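/- A nontrivial linear identity of length 6 is ultimately AC-nice if and only if, up to interchanging its two sides (identifying ⟨s,t,f⟩ with ⟨t,s,f⁻¹⟩), it is the identity (x*y)*z = y*(z*x), i.e., the triple ⟨L₃, R₃, f₀⟩ asserting (a₁*a₂)*a₃ = a₂*(a₃*a₁) for all a₁, a₂, a₃. -/

import Mathlib

/-- Bracketings: full binary trees in which every internal node has two children. -/
inductive Brack : Type
  | leaf : Brack
  | node : Brack → Brack → Brack

/-- Number of leaves of a bracketing. -/
def Brack.leaves : Brack → ℕ
  | .leaf => 1
  | .node l r => l.leaves + r.leaves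

/-- The `s`-product in a magma `G`: evaluate the bracketing `s`, labelling its leaves
from left to right by `a k, a (k+1), …`. -/
def Brack.eval {G : Type*} [Mul G] : Brack → (ℕ → G) → ℕ → G
  | .leaf, a, k => a k
  | .node l r, a, k => l.eval a k * r.eval a (k + l.leaves)

/-- Extend a permutation of `{0, …, n−1}` to `ℕ` (identity elsewhere). -/
def permNat {n : ℕ} (f : Equiv.Perm (Fin n)) (i : ℕ) : ℕ :=
  if h : i < n then (f ⟨i, h⟩ : ℕ) else i

/-- A magma `G` satisfies the linear identity `⟨s, t, f⟩` if for all `a₁, …, aₙ ∈ G`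
the `s`-product of `(a₁, …, aₙ)` equals the `t`-product of `(a_{f(1)}, …, a_{f(n)})`. -/
def Satisfies (G : Type*) [Mul G] {n : ℕ} (s t : Brack) (f : Equiv.Perm (Fin n)) : Prop :=
  ∀ a : ℕ → G, s.eval a 0 = t.eval (fun i => a (permNat f i)) 0

/-- A magma `G` is `m`AC-nice if any two products of the same `m` elements coincide:
for every `a`, all bracketings `s, t` with `m` leaves and all permutations `f, g`,
the `s`-product of `(a_{f(1)}, …, a_{f(m)})` equals the `t`-product of
`(a_{g(1)}, …, a_{g(m)})`. -/
def ACnice (G : Type*) [Mul G] (m : ℕ) : Prop :=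
  ∀ (a : ℕ → G) (s t : Brack), s.leaves = m → t.leaves = m →
    ∀ f g : Equiv.Perm (Fin m),
      s.eval (fun i => a (permNat f i)) 0 = t.eval (fun i => a (permNat g i)) 0


/-! ### Auxiliary material -/

section Aux

lemma Brack.leaves_pos (s : Brack) : 0 < s.leaves := by
  induction s with
  | leaf => simp [Brack.leaves]
  | node l r ihl ihr => simp [Brack.leaves]; omega

lemma cls1 (s : Brack) (h : s.leaves = 1) : s = .leaf := by
  cases s with
  | leaf => rfl
  | node l r =>
    have h1 := l.leaves_pos; have h2 := r.leaves_pos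
    simp [Brack.leaves] at h; omega

lemma cls2 (s : Brack) (h : s.leaves = 2) : s = .node .leaf .leaf := by
  cases s with
  | leaf => simp [Brack.leaves] at h
  | node l r =>
    have h1 := l.leaves_pos; have h2 := r.leaves_pos
    simp [Brack.leaves] at h
    have : l.leaves = 1 ∧ r.leaves = 1 := by omega
    rw [cls1 l this.1, cls1 r this.2]

lemma cls3 (s : Brack) (h : s.leaves = 3) :
    s = .node (.node .leaf .leaf) .leaf ∨ s = .node .leaf (.node .leaf .leaf) := by
  cases s with
  | leaf => simp [Brack.leaves] at h
  | node l r =>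
    have h1 := l.leaves_pos; have h2 := r.leaves_pos
    simp [Brack.leaves] at h
    have : (l.leaves = 1 ∧ r.leaves = 2) ∨ (l.leaves = 2 ∧ r.leaves = 1) := by omega
    rcases this with ⟨ha, hb⟩ | ⟨ha, hb⟩
    · right; rw [cls1 l ha, cls2 r hb]
    · left; rw [cls2 l ha, cls1 r hb]

lemma cls4 (s : Brack) (h : s.leaves = 4) :
    s = .node .leaf (.node .leaf (.node .leaf .leaf)) ∨
    s = .node .leaf (.node (.node .leaf .leaf) .leaf) ∨
    s = .node (.node .leaf .leaf) (.node .leaf .leaf) ∨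
    s = .node (.node .leaf (.node .leaf .leaf)) .leaf ∨
    s = .node (.node (.node .leaf .leaf) .leaf) .leaf := by
  cases s with
  | leaf => simp [Brack.leaves] at h
  | node l r =>
    have h1 := l.leaves_pos; have h2 := r.leaves_pos
    simp [Brack.leaves] at h
    have : (l.leaves = 1 ∧ r.leaves = 3) ∨ (l.leaves = 2 ∧ r.leaves = 2) ∨
        (l.leaves = 3 ∧ r.leaves = 1) := by omega
    rcases this with ⟨ha, hb⟩ | ⟨ha, hb⟩ | ⟨ha, hb⟩
    · obtain rfl := cls1 l ha
      rcases cls3 r hb with rfl | rfl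
      · right; left; rfl
      · left; rfl
    · obtain rfl := cls2 l ha; obtain rfl := cls2 r hb
      right; right; left; rfl
    · obtain rfl := cls1 r hb
      rcases cls3 l ha with rfl | rfl
      · right; right; right; right; rfl
      · right; right; right; left; rfl

/-- Left comb with `n+1` leaves. -/
def LC : ℕ → Brack
  | 0 => .leaf
  | n + 1 => .node (LC n) .leaf

/-- Right comb with `n+1` leaves. -/
def RC : ℕ → Brack
  | 0 => .leaf
  | n + 1 => .node .leaf (RC n)

lemma LC_leaves (n : ℕ) : (LC n).leaves = n + 1 := by
  induction n with
  | zero => rfl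
  | succ n ih => simp [LC, Brack.leaves, ih]

lemma RC_leaves (n : ℕ) : (RC n).leaves = n + 1 := by
  induction n with
  | zero => rfl
  | succ n ih => simp [RC, Brack.leaves, ih]; omega

lemma permNat_one {n : ℕ} (i : ℕ) : permNat (1 : Equiv.Perm (Fin n)) i = i := by
  unfold permNat; split <;> simp

lemma permNat_mul {n : ℕ} (f g : Equiv.Perm (Fin n)) (i : ℕ) :
    permNat (f * g) i = permNat f (permNat g i) := by
  unfold permNat
  by_cases h : i < n
  · simp [h, Fin.is_lt]
  · simp [h]

lemma permNat_fin {n : ℕ} (f : Equiv.Perm (Fin n)) (i : Fin n) :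
    permNat f (i : ℕ) = (f i : ℕ) := by
  unfold permNat
  simp [i.isLt]

lemma permNat_mk {n : ℕ} (f : Equiv.Perm (Fin n)) (i : ℕ) (h : i < n) :
    permNat f i = (f ⟨i, h⟩ : ℕ) := dif_pos h

end Aux

/-! ### The good identity implies 5AC-niceness -/

section Good

variable {G : Type*} [Mul G]

/-- Canonical product of five values. -/
def Pfive (b : ℕ → G) : G := b 0 * b 1 * b 2 * b 3 * b 4

lemma shape_lem1 (H : ∀ x y z : G, x * y * z = y * (z * x)) (b0 b1 b2 b3 b4 : G) : b0 * (b1 * (b2 * (b3 * b4))) = (((b0 * b1) * b2) * b3) * b4 := by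
  calc b0 * (b1 * (b2 * (b3 * b4))) = b0 * (((b3 * b4) * b1) * b2) := by rw [← H (b3 * b4) b1 b2]
    _ = (b2 * b0) * ((b3 * b4) * b1) := by rw [← H b2 b0 ((b3 * b4) * b1)]
    _ = (b1 * (b2 * b0)) * (b3 * b4) := by rw [← H b1 (b2 * b0) (b3 * b4)]
    _ = (b4 * (b1 * (b2 * b0))) * b3 := by rw [← H b4 (b1 * (b2 * b0)) b3]
    _ = (((b2 * b0) * b4) * b1) * b3 := by rw [← H (b2 * b0) b4 b1]
    _ = b1 * (b3 * ((b2 * b0) * b4)) := by rw [H ((b2 * b0) * b4) b1 b3]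
    _ = b1 * (b3 * (b0 * (b4 * b2))) := by rw [H b2 b0 b4]
    _ = b1 * (((b4 * b2) * b3) * b0) := by rw [← H (b4 * b2) b3 b0]
    _ = (b0 * b1) * ((b4 * b2) * b3) := by rw [← H b0 b1 ((b4 * b2) * b3)]
    _ = (b3 * (b0 * b1)) * (b4 * b2) := by rw [← H b3 (b0 * b1) (b4 * b2)]
    _ = (b2 * (b3 * (b0 * b1))) * b4 := by rw [← H b2 (b3 * (b0 * b1)) b4]
    _ = (((b0 * b1) * b2) * b3) * b4 := by rw [← H (b0 * b1) b2 b3]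

lemma shape_lem2 (H : ∀ x y z : G, x * y * z = y * (z * x)) (b0 b1 b2 b3 b4 : G) : b0 * (b1 * ((b2 * b3) * b4)) = (((b0 * b1) * b2) * b3) * b4 := by
  calc b0 * (b1 * ((b2 * b3) * b4)) = (((b2 * b3) * b4) * b0) * b1 := by rw [← H ((b2 * b3) * b4) b0 b1]
    _ = (b4 * (b0 * (b2 * b3))) * b1 := by rw [H (b2 * b3) b4 b0]
    _ = (b4 * ((b3 * b0) * b2)) * b1 := by rw [← H b3 b0 b2]
    _ = ((b2 * b4) * (b3 * b0)) * b1 := by rw [← H b2 b4 (b3 * b0)]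
    _ = (b3 * b0) * (b1 * (b2 * b4)) := by rw [H (b2 * b4) (b3 * b0) b1]
    _ = b0 * ((b1 * (b2 * b4)) * b3) := by rw [H b3 b0 (b1 * (b2 * b4))]
    _ = b0 * (((b4 * b1) * b2) * b3) := by rw [← H b4 b1 b2]
    _ = b0 * (b2 * (b3 * (b4 * b1))) := by rw [H (b4 * b1) b2 b3]
    _ = b0 * (b2 * ((b1 * b3) * b4)) := by rw [← H b1 b3 b4]
    _ = b0 * ((b4 * b2) * (b1 * b3)) := by rw [← H b4 b2 (b1 * b3)]
    _ = ((b1 * b3) * b0) * (b4 * b2) := by rw [← H (b1 * b3) b0 (b4 * b2)]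
    _ = (b2 * ((b1 * b3) * b0)) * b4 := by rw [← H b2 ((b1 * b3) * b0) b4]
    _ = (b2 * (b3 * (b0 * b1))) * b4 := by rw [H b1 b3 b0]
    _ = (((b0 * b1) * b2) * b3) * b4 := by rw [← H (b0 * b1) b2 b3]

lemma shape_lem3 (H : ∀ x y z : G, x * y * z = y * (z * x)) (b0 b1 b2 b3 b4 : G) : b0 * ((b1 * b2) * (b3 * b4)) = (((b0 * b1) * b2) * b3) * b4 := by
  calc b0 * ((b1 * b2) * (b3 * b4)) = b0 * ((b4 * (b1 * b2)) * b3) := by rw [← H b4 (b1 * b2) b3]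
    _ = (b3 * b0) * (b4 * (b1 * b2)) := by rw [← H b3 b0 (b4 * (b1 * b2))]
    _ = (b3 * b0) * ((b2 * b4) * b1) := by rw [← H b2 b4 b1]
    _ = (b1 * (b3 * b0)) * (b2 * b4) := by rw [← H b1 (b3 * b0) (b2 * b4)]
    _ = ((b0 * b1) * b3) * (b2 * b4) := by rw [← H b0 b1 b3]
    _ = b3 * ((b2 * b4) * (b0 * b1)) := by rw [H (b0 * b1) b3 (b2 * b4)]
    _ = b3 * (b4 * ((b0 * b1) * b2)) := by rw [H b2 b4 (b0 * b1)]
    _ = (((b0 * b1) * b2) * b3) * b4 := by rw [← H ((b0 * b1) * b2) b3 b4]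

lemma shape_lem4 (H : ∀ x y z : G, x * y * z = y * (z * x)) (b0 b1 b2 b3 b4 : G) : b0 * ((b1 * (b2 * b3)) * b4) = (((b0 * b1) * b2) * b3) * b4 := by
  calc b0 * ((b1 * (b2 * b3)) * b4) = b0 * ((b2 * b3) * (b4 * b1)) := by rw [H b1 (b2 * b3) b4]
    _ = b0 * (b3 * ((b4 * b1) * b2)) := by rw [H b2 b3 (b4 * b1)]
    _ = (((b4 * b1) * b2) * b0) * b3 := by rw [← H ((b4 * b1) * b2) b0 b3]
    _ = (b2 * (b0 * (b4 * b1))) * b3 := by rw [H (b4 * b1) b2 b0]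
    _ = (b2 * ((b1 * b0) * b4)) * b3 := by rw [← H b1 b0 b4]
    _ = ((b4 * b2) * (b1 * b0)) * b3 := by rw [← H b4 b2 (b1 * b0)]
    _ = (b1 * b0) * (b3 * (b4 * b2)) := by rw [H (b4 * b2) (b1 * b0) b3]
    _ = b0 * ((b3 * (b4 * b2)) * b1) := by rw [H b1 b0 (b3 * (b4 * b2))]
    _ = b0 * ((b4 * b2) * (b1 * b3)) := by rw [H b3 (b4 * b2) b1]
    _ = ((b1 * b3) * b0) * (b4 * b2) := by rw [← H (b1 * b3) b0 (b4 * b2)]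
    _ = (b2 * ((b1 * b3) * b0)) * b4 := by rw [← H b2 ((b1 * b3) * b0) b4]
    _ = (b2 * (b3 * (b0 * b1))) * b4 := by rw [H b1 b3 b0]
    _ = (((b0 * b1) * b2) * b3) * b4 := by rw [← H (b0 * b1) b2 b3]

lemma shape_lem5 (H : ∀ x y z : G, x * y * z = y * (z * x)) (b0 b1 b2 b3 b4 : G) : b0 * (((b1 * b2) * b3) * b4) = (((b0 * b1) * b2) * b3) * b4 := by
  calc b0 * (((b1 * b2) * b3) * b4) = (b4 * b0) * ((b1 * b2) * b3) := by rw [← H b4 b0 ((b1 * b2) * b3)]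
    _ = (b4 * b0) * (b2 * (b3 * b1)) := by rw [H b1 b2 b3]
    _ = ((b3 * b1) * (b4 * b0)) * b2 := by rw [← H (b3 * b1) (b4 * b0) b2]
    _ = ((b0 * (b3 * b1)) * b4) * b2 := by rw [← H b0 (b3 * b1) b4]
    _ = (((b1 * b0) * b3) * b4) * b2 := by rw [← H b1 b0 b3]
    _ = (b3 * (b4 * (b1 * b0))) * b2 := by rw [H (b1 * b0) b3 b4]
    _ = (b4 * (b1 * b0)) * (b2 * b3) := by rw [H b3 (b4 * (b1 * b0)) b2]
    _ = (b1 * b0) * ((b2 * b3) * b4) := by rw [H b4 (b1 * b0) (b2 * b3)]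
    _ = b0 * (((b2 * b3) * b4) * b1) := by rw [H b1 b0 ((b2 * b3) * b4)]
    _ = b0 * ((b3 * (b4 * b2)) * b1) := by rw [H b2 b3 b4]
    _ = b0 * ((b4 * b2) * (b1 * b3)) := by rw [H b3 (b4 * b2) b1]
    _ = ((b1 * b3) * b0) * (b4 * b2) := by rw [← H (b1 * b3) b0 (b4 * b2)]
    _ = (b2 * ((b1 * b3) * b0)) * b4 := by rw [← H b2 ((b1 * b3) * b0) b4]
    _ = (b2 * (b3 * (b0 * b1))) * b4 := by rw [H b1 b3 b0]
    _ = (((b0 * b1) * b2) * b3) * b4 := by rw [← H (b0 * b1) b2 b3]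

lemma shape_lem6 (H : ∀ x y z : G, x * y * z = y * (z * x)) (b0 b1 b2 b3 b4 : G) : (b0 * b1) * (b2 * (b3 * b4)) = (((b0 * b1) * b2) * b3) * b4 := by
  calc (b0 * b1) * (b2 * (b3 * b4)) = (b0 * b1) * ((b4 * b2) * b3) := by rw [← H b4 b2 b3]
    _ = (b3 * (b0 * b1)) * (b4 * b2) := by rw [← H b3 (b0 * b1) (b4 * b2)]
    _ = (b2 * (b3 * (b0 * b1))) * b4 := by rw [← H b2 (b3 * (b0 * b1)) b4]
    _ = (((b0 * b1) * b2) * b3) * b4 := by rw [← H (b0 * b1) b2 b3]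

lemma shape_lem7 (H : ∀ x y z : G, x * y * z = y * (z * x)) (b0 b1 b2 b3 b4 : G) : (b0 * b1) * ((b2 * b3) * b4) = (((b0 * b1) * b2) * b3) * b4 := by
  calc (b0 * b1) * ((b2 * b3) * b4) = b1 * (((b2 * b3) * b4) * b0) := by rw [H b0 b1 ((b2 * b3) * b4)]
    _ = b1 * (b4 * (b0 * (b2 * b3))) := by rw [H (b2 * b3) b4 b0]
    _ = b1 * (b4 * ((b3 * b0) * b2)) := by rw [← H b3 b0 b2]
    _ = b1 * ((b2 * b4) * (b3 * b0)) := by rw [← H b2 b4 (b3 * b0)]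
    _ = ((b3 * b0) * b1) * (b2 * b4) := by rw [← H (b3 * b0) b1 (b2 * b4)]
    _ = (b0 * (b1 * b3)) * (b2 * b4) := by rw [H b3 b0 b1]
    _ = (b1 * b3) * ((b2 * b4) * b0) := by rw [H b0 (b1 * b3) (b2 * b4)]
    _ = (b1 * b3) * (b4 * (b0 * b2)) := by rw [H b2 b4 b0]
    _ = ((b0 * b2) * (b1 * b3)) * b4 := by rw [← H (b0 * b2) (b1 * b3) b4]
    _ = (b2 * ((b1 * b3) * b0)) * b4 := by rw [H b0 b2 (b1 * b3)]
    _ = (b2 * (b3 * (b0 * b1))) * b4 := by rw [H b1 b3 b0]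
    _ = (((b0 * b1) * b2) * b3) * b4 := by rw [← H (b0 * b1) b2 b3]

lemma shape_lem8 (H : ∀ x y z : G, x * y * z = y * (z * x)) (b0 b1 b2 b3 b4 : G) : (b0 * (b1 * b2)) * (b3 * b4) = (((b0 * b1) * b2) * b3) * b4 := by
  calc (b0 * (b1 * b2)) * (b3 * b4) = ((b2 * b0) * b1) * (b3 * b4) := by rw [← H b2 b0 b1]
    _ = b1 * ((b3 * b4) * (b2 * b0)) := by rw [H (b2 * b0) b1 (b3 * b4)]
    _ = b1 * (b4 * ((b2 * b0) * b3)) := by rw [H b3 b4 (b2 * b0)]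
    _ = (((b2 * b0) * b3) * b1) * b4 := by rw [← H ((b2 * b0) * b3) b1 b4]
    _ = ((b0 * (b3 * b2)) * b1) * b4 := by rw [H b2 b0 b3]
    _ = ((b3 * b2) * (b1 * b0)) * b4 := by rw [H b0 (b3 * b2) b1]
    _ = (b2 * ((b1 * b0) * b3)) * b4 := by rw [H b3 b2 (b1 * b0)]
    _ = ((b1 * b0) * b3) * (b4 * b2) := by rw [H b2 ((b1 * b0) * b3) b4]
    _ = b3 * ((b4 * b2) * (b1 * b0)) := by rw [H (b1 * b0) b3 (b4 * b2)]
    _ = b3 * ((b0 * (b4 * b2)) * b1) := by rw [← H b0 (b4 * b2) b1]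
    _ = b3 * (((b2 * b0) * b4) * b1) := by rw [← H b2 b0 b4]
    _ = b3 * (b4 * (b1 * (b2 * b0))) := by rw [H (b2 * b0) b4 b1]
    _ = ((b1 * (b2 * b0)) * b3) * b4 := by rw [← H (b1 * (b2 * b0)) b3 b4]
    _ = (((b0 * b1) * b2) * b3) * b4 := by rw [← H b0 b1 b2]

lemma shape_lem9 (H : ∀ x y z : G, x * y * z = y * (z * x)) (b0 b1 b2 b3 b4 : G) : ((b0 * b1) * b2) * (b3 * b4) = (((b0 * b1) * b2) * b3) * b4 := by
  calc ((b0 * b1) * b2) * (b3 * b4) = (b4 * ((b0 * b1) * b2)) * b3 := by rw [← H b4 ((b0 * b1) * b2) b3]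
    _ = (b4 * (b1 * (b2 * b0))) * b3 := by rw [H b0 b1 b2]
    _ = (((b2 * b0) * b4) * b1) * b3 := by rw [← H (b2 * b0) b4 b1]
    _ = b1 * (b3 * ((b2 * b0) * b4)) := by rw [H ((b2 * b0) * b4) b1 b3]
    _ = b1 * (b3 * (b0 * (b4 * b2))) := by rw [H b2 b0 b4]
    _ = b1 * (((b4 * b2) * b3) * b0) := by rw [← H (b4 * b2) b3 b0]
    _ = (b0 * b1) * ((b4 * b2) * b3) := by rw [← H b0 b1 ((b4 * b2) * b3)]
    _ = (b3 * (b0 * b1)) * (b4 * b2) := by rw [← H b3 (b0 * b1) (b4 * b2)]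
    _ = (b2 * (b3 * (b0 * b1))) * b4 := by rw [← H b2 (b3 * (b0 * b1)) b4]
    _ = (((b0 * b1) * b2) * b3) * b4 := by rw [← H (b0 * b1) b2 b3]

lemma shape_lem10 (H : ∀ x y z : G, x * y * z = y * (z * x)) (b0 b1 b2 b3 b4 : G) : (b0 * (b1 * (b2 * b3))) * b4 = (((b0 * b1) * b2) * b3) * b4 := by
  calc (b0 * (b1 * (b2 * b3))) * b4 = (b0 * ((b3 * b1) * b2)) * b4 := by rw [← H b3 b1 b2]
    _ = ((b2 * b0) * (b3 * b1)) * b4 := by rw [← H b2 b0 (b3 * b1)]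
    _ = ((b1 * (b2 * b0)) * b3) * b4 := by rw [← H b1 (b2 * b0) b3]
    _ = (((b0 * b1) * b2) * b3) * b4 := by rw [← H b0 b1 b2]

lemma shape_lem11 (H : ∀ x y z : G, x * y * z = y * (z * x)) (b0 b1 b2 b3 b4 : G) : (b0 * ((b1 * b2) * b3)) * b4 = (((b0 * b1) * b2) * b3) * b4 := by
  calc (b0 * ((b1 * b2) * b3)) * b4 = ((b3 * b0) * (b1 * b2)) * b4 := by rw [← H b3 b0 (b1 * b2)]
    _ = ((b2 * (b3 * b0)) * b1) * b4 := by rw [← H b2 (b3 * b0) b1]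
    _ = b1 * (b4 * (b2 * (b3 * b0))) := by rw [H (b2 * (b3 * b0)) b1 b4]
    _ = b1 * (b4 * ((b0 * b2) * b3)) := by rw [← H b0 b2 b3]
    _ = b1 * ((b3 * b4) * (b0 * b2)) := by rw [← H b3 b4 (b0 * b2)]
    _ = b1 * ((b2 * (b3 * b4)) * b0) := by rw [← H b2 (b3 * b4) b0]
    _ = (b0 * b1) * (b2 * (b3 * b4)) := by rw [← H b0 b1 (b2 * (b3 * b4))]
    _ = (b0 * b1) * ((b4 * b2) * b3) := by rw [← H b4 b2 b3]
    _ = (b3 * (b0 * b1)) * (b4 * b2) := by rw [← H b3 (b0 * b1) (b4 * b2)]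
    _ = (b2 * (b3 * (b0 * b1))) * b4 := by rw [← H b2 (b3 * (b0 * b1)) b4]
    _ = (((b0 * b1) * b2) * b3) * b4 := by rw [← H (b0 * b1) b2 b3]

lemma shape_lem12 (H : ∀ x y z : G, x * y * z = y * (z * x)) (b0 b1 b2 b3 b4 : G) : ((b0 * b1) * (b2 * b3)) * b4 = (((b0 * b1) * b2) * b3) * b4 := by
  calc ((b0 * b1) * (b2 * b3)) * b4 = ((b3 * (b0 * b1)) * b2) * b4 := by rw [← H b3 (b0 * b1) b2]
    _ = b2 * (b4 * (b3 * (b0 * b1))) := by rw [H (b3 * (b0 * b1)) b2 b4]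
    _ = b2 * (((b0 * b1) * b4) * b3) := by rw [← H (b0 * b1) b4 b3]
    _ = b2 * ((b1 * (b4 * b0)) * b3) := by rw [H b0 b1 b4]
    _ = b2 * ((b4 * b0) * (b3 * b1)) := by rw [H b1 (b4 * b0) b3]
    _ = ((b3 * b1) * b2) * (b4 * b0) := by rw [← H (b3 * b1) b2 (b4 * b0)]
    _ = (b0 * ((b3 * b1) * b2)) * b4 := by rw [← H b0 ((b3 * b1) * b2) b4]
    _ = ((b2 * b0) * (b3 * b1)) * b4 := by rw [← H b2 b0 (b3 * b1)]
    _ = ((b1 * (b2 * b0)) * b3) * b4 := by rw [← H b1 (b2 * b0) b3]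
    _ = (((b0 * b1) * b2) * b3) * b4 := by rw [← H b0 b1 b2]

lemma shape_lem13 (H : ∀ x y z : G, x * y * z = y * (z * x)) (b0 b1 b2 b3 b4 : G) : ((b0 * (b1 * b2)) * b3) * b4 = (((b0 * b1) * b2) * b3) * b4 := by
  calc ((b0 * (b1 * b2)) * b3) * b4 = ((b1 * b2) * (b3 * b0)) * b4 := by rw [H b0 (b1 * b2) b3]
    _ = (b3 * b0) * (b4 * (b1 * b2)) := by rw [H (b1 * b2) (b3 * b0) b4]
    _ = (b3 * b0) * ((b2 * b4) * b1) := by rw [← H b2 b4 b1]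
    _ = (b1 * (b3 * b0)) * (b2 * b4) := by rw [← H b1 (b3 * b0) (b2 * b4)]
    _ = ((b0 * b1) * b3) * (b2 * b4) := by rw [← H b0 b1 b3]
    _ = b3 * ((b2 * b4) * (b0 * b1)) := by rw [H (b0 * b1) b3 (b2 * b4)]
    _ = b3 * (b4 * ((b0 * b1) * b2)) := by rw [H b2 b4 (b0 * b1)]
    _ = (((b0 * b1) * b2) * b3) * b4 := by rw [← H ((b0 * b1) * b2) b3 b4]

lemma swap_lem01 (H : ∀ x y z : G, x * y * z = y * (z * x)) (b0 b1 b2 b3 b4 : G) : (((b1 * b0) * b2) * b3) * b4 = (((b0 * b1) * b2) * b3) * b4 := by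
  calc (((b1 * b0) * b2) * b3) * b4 = b3 * (b4 * ((b1 * b0) * b2)) := by rw [H ((b1 * b0) * b2) b3 b4]
    _ = b3 * ((b2 * b4) * (b1 * b0)) := by rw [← H b2 b4 (b1 * b0)]
    _ = b3 * ((b0 * (b2 * b4)) * b1) := by rw [← H b0 (b2 * b4) b1]
    _ = (b1 * b3) * (b0 * (b2 * b4)) := by rw [← H b1 b3 (b0 * (b2 * b4))]
    _ = (b1 * b3) * ((b4 * b0) * b2) := by rw [← H b4 b0 b2]
    _ = (b2 * (b1 * b3)) * (b4 * b0) := by rw [← H b2 (b1 * b3) (b4 * b0)]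
    _ = ((b3 * b2) * b1) * (b4 * b0) := by rw [← H b3 b2 b1]
    _ = b1 * ((b4 * b0) * (b3 * b2)) := by rw [H (b3 * b2) b1 (b4 * b0)]
    _ = b1 * ((b2 * (b4 * b0)) * b3) := by rw [← H b2 (b4 * b0) b3]
    _ = b1 * (((b0 * b2) * b4) * b3) := by rw [← H b0 b2 b4]
    _ = b1 * (b4 * (b3 * (b0 * b2))) := by rw [H (b0 * b2) b4 b3]
    _ = ((b3 * (b0 * b2)) * b1) * b4 := by rw [← H (b3 * (b0 * b2)) b1 b4]
    _ = ((b0 * b2) * (b1 * b3)) * b4 := by rw [H b3 (b0 * b2) b1]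
    _ = (b2 * ((b1 * b3) * b0)) * b4 := by rw [H b0 b2 (b1 * b3)]
    _ = (b2 * (b3 * (b0 * b1))) * b4 := by rw [H b1 b3 b0]
    _ = (((b0 * b1) * b2) * b3) * b4 := by rw [← H (b0 * b1) b2 b3]

lemma swap_lem02 (H : ∀ x y z : G, x * y * z = y * (z * x)) (b0 b1 b2 b3 b4 : G) : (((b2 * b1) * b0) * b3) * b4 = (((b0 * b1) * b2) * b3) * b4 := by
  calc (((b2 * b1) * b0) * b3) * b4 = b3 * (b4 * ((b2 * b1) * b0)) := by rw [H ((b2 * b1) * b0) b3 b4]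
    _ = b3 * ((b0 * b4) * (b2 * b1)) := by rw [← H b0 b4 (b2 * b1)]
    _ = ((b2 * b1) * b3) * (b0 * b4) := by rw [← H (b2 * b1) b3 (b0 * b4)]
    _ = (b4 * ((b2 * b1) * b3)) * b0 := by rw [← H b4 ((b2 * b1) * b3) b0]
    _ = (b4 * (b1 * (b3 * b2))) * b0 := by rw [H b2 b1 b3]
    _ = (((b3 * b2) * b4) * b1) * b0 := by rw [← H (b3 * b2) b4 b1]
    _ = b1 * (b0 * ((b3 * b2) * b4)) := by rw [H ((b3 * b2) * b4) b1 b0]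
    _ = b1 * ((b4 * b0) * (b3 * b2)) := by rw [← H b4 b0 (b3 * b2)]
    _ = b1 * ((b2 * (b4 * b0)) * b3) := by rw [← H b2 (b4 * b0) b3]
    _ = b1 * (((b0 * b2) * b4) * b3) := by rw [← H b0 b2 b4]
    _ = b1 * (b4 * (b3 * (b0 * b2))) := by rw [H (b0 * b2) b4 b3]
    _ = ((b3 * (b0 * b2)) * b1) * b4 := by rw [← H (b3 * (b0 * b2)) b1 b4]
    _ = ((b0 * b2) * (b1 * b3)) * b4 := by rw [H b3 (b0 * b2) b1]
    _ = (b2 * ((b1 * b3) * b0)) * b4 := by rw [H b0 b2 (b1 * b3)]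
    _ = (b2 * (b3 * (b0 * b1))) * b4 := by rw [H b1 b3 b0]
    _ = (((b0 * b1) * b2) * b3) * b4 := by rw [← H (b0 * b1) b2 b3]

lemma swap_lem03 (H : ∀ x y z : G, x * y * z = y * (z * x)) (b0 b1 b2 b3 b4 : G) : (((b3 * b1) * b2) * b0) * b4 = (((b0 * b1) * b2) * b3) * b4 := by
  calc (((b3 * b1) * b2) * b0) * b4 = b0 * (b4 * ((b3 * b1) * b2)) := by rw [H ((b3 * b1) * b2) b0 b4]
    _ = b0 * (b4 * (b1 * (b2 * b3))) := by rw [H b3 b1 b2]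
    _ = b0 * (((b2 * b3) * b4) * b1) := by rw [← H (b2 * b3) b4 b1]
    _ = b0 * ((b3 * (b4 * b2)) * b1) := by rw [H b2 b3 b4]
    _ = b0 * ((b4 * b2) * (b1 * b3)) := by rw [H b3 (b4 * b2) b1]
    _ = ((b1 * b3) * b0) * (b4 * b2) := by rw [← H (b1 * b3) b0 (b4 * b2)]
    _ = (b2 * ((b1 * b3) * b0)) * b4 := by rw [← H b2 ((b1 * b3) * b0) b4]
    _ = (b2 * (b3 * (b0 * b1))) * b4 := by rw [H b1 b3 b0]
    _ = (((b0 * b1) * b2) * b3) * b4 := by rw [← H (b0 * b1) b2 b3]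

lemma swap_lem04 (H : ∀ x y z : G, x * y * z = y * (z * x)) (b0 b1 b2 b3 b4 : G) : (((b4 * b1) * b2) * b3) * b0 = (((b0 * b1) * b2) * b3) * b4 := by
  calc (((b4 * b1) * b2) * b3) * b0 = b3 * (b0 * ((b4 * b1) * b2)) := by rw [H ((b4 * b1) * b2) b3 b0]
    _ = b3 * (b0 * (b1 * (b2 * b4))) := by rw [H b4 b1 b2]
    _ = b3 * (((b2 * b4) * b0) * b1) := by rw [← H (b2 * b4) b0 b1]
    _ = (b1 * b3) * ((b2 * b4) * b0) := by rw [← H b1 b3 ((b2 * b4) * b0)]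
    _ = (b1 * b3) * (b4 * (b0 * b2)) := by rw [H b2 b4 b0]
    _ = ((b0 * b2) * (b1 * b3)) * b4 := by rw [← H (b0 * b2) (b1 * b3) b4]
    _ = (b2 * ((b1 * b3) * b0)) * b4 := by rw [H b0 b2 (b1 * b3)]
    _ = (b2 * (b3 * (b0 * b1))) * b4 := by rw [H b1 b3 b0]
    _ = (((b0 * b1) * b2) * b3) * b4 := by rw [← H (b0 * b1) b2 b3]

lemma swap_lem12 (H : ∀ x y z : G, x * y * z = y * (z * x)) (b0 b1 b2 b3 b4 : G) : (((b0 * b2) * b1) * b3) * b4 = (((b0 * b1) * b2) * b3) * b4 := by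
  calc (((b0 * b2) * b1) * b3) * b4 = (b1 * (b3 * (b0 * b2))) * b4 := by rw [H (b0 * b2) b1 b3]
    _ = (b1 * ((b2 * b3) * b0)) * b4 := by rw [← H b2 b3 b0]
    _ = ((b0 * b1) * (b2 * b3)) * b4 := by rw [← H b0 b1 (b2 * b3)]
    _ = ((b3 * (b0 * b1)) * b2) * b4 := by rw [← H b3 (b0 * b1) b2]
    _ = b2 * (b4 * (b3 * (b0 * b1))) := by rw [H (b3 * (b0 * b1)) b2 b4]
    _ = b2 * (((b0 * b1) * b4) * b3) := by rw [← H (b0 * b1) b4 b3]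
    _ = b2 * ((b1 * (b4 * b0)) * b3) := by rw [H b0 b1 b4]
    _ = b2 * ((b4 * b0) * (b3 * b1)) := by rw [H b1 (b4 * b0) b3]
    _ = ((b3 * b1) * b2) * (b4 * b0) := by rw [← H (b3 * b1) b2 (b4 * b0)]
    _ = (b0 * ((b3 * b1) * b2)) * b4 := by rw [← H b0 ((b3 * b1) * b2) b4]
    _ = ((b2 * b0) * (b3 * b1)) * b4 := by rw [← H b2 b0 (b3 * b1)]
    _ = ((b1 * (b2 * b0)) * b3) * b4 := by rw [← H b1 (b2 * b0) b3]
    _ = (((b0 * b1) * b2) * b3) * b4 := by rw [← H b0 b1 b2]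

lemma swap_lem13 (H : ∀ x y z : G, x * y * z = y * (z * x)) (b0 b1 b2 b3 b4 : G) : (((b0 * b3) * b2) * b1) * b4 = (((b0 * b1) * b2) * b3) * b4 := by
  calc (((b0 * b3) * b2) * b1) * b4 = b1 * (b4 * ((b0 * b3) * b2)) := by rw [H ((b0 * b3) * b2) b1 b4]
    _ = b1 * ((b2 * b4) * (b0 * b3)) := by rw [← H b2 b4 (b0 * b3)]
    _ = ((b0 * b3) * b1) * (b2 * b4) := by rw [← H (b0 * b3) b1 (b2 * b4)]
    _ = (b4 * ((b0 * b3) * b1)) * b2 := by rw [← H b4 ((b0 * b3) * b1) b2]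
    _ = (b4 * (b3 * (b1 * b0))) * b2 := by rw [H b0 b3 b1]
    _ = (((b1 * b0) * b4) * b3) * b2 := by rw [← H (b1 * b0) b4 b3]
    _ = b3 * (b2 * ((b1 * b0) * b4)) := by rw [H ((b1 * b0) * b4) b3 b2]
    _ = b3 * ((b4 * b2) * (b1 * b0)) := by rw [← H b4 b2 (b1 * b0)]
    _ = b3 * ((b0 * (b4 * b2)) * b1) := by rw [← H b0 (b4 * b2) b1]
    _ = b3 * (((b2 * b0) * b4) * b1) := by rw [← H b2 b0 b4]
    _ = b3 * (b4 * (b1 * (b2 * b0))) := by rw [H (b2 * b0) b4 b1]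
    _ = ((b1 * (b2 * b0)) * b3) * b4 := by rw [← H (b1 * (b2 * b0)) b3 b4]
    _ = (((b0 * b1) * b2) * b3) * b4 := by rw [← H b0 b1 b2]

lemma swap_lem14 (H : ∀ x y z : G, x * y * z = y * (z * x)) (b0 b1 b2 b3 b4 : G) : (((b0 * b4) * b2) * b3) * b1 = (((b0 * b1) * b2) * b3) * b4 := by
  calc (((b0 * b4) * b2) * b3) * b1 = b3 * (b1 * ((b0 * b4) * b2)) := by rw [H ((b0 * b4) * b2) b3 b1]
    _ = b3 * (b1 * (b4 * (b2 * b0))) := by rw [H b0 b4 b2]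
    _ = b3 * (((b2 * b0) * b1) * b4) := by rw [← H (b2 * b0) b1 b4]
    _ = (b4 * b3) * ((b2 * b0) * b1) := by rw [← H b4 b3 ((b2 * b0) * b1)]
    _ = (b1 * (b4 * b3)) * (b2 * b0) := by rw [← H b1 (b4 * b3) (b2 * b0)]
    _ = (b0 * (b1 * (b4 * b3))) * b2 := by rw [← H b0 (b1 * (b4 * b3)) b2]
    _ = (((b4 * b3) * b0) * b1) * b2 := by rw [← H (b4 * b3) b0 b1]
    _ = b1 * (b2 * ((b4 * b3) * b0)) := by rw [H ((b4 * b3) * b0) b1 b2]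
    _ = b1 * (b2 * (b3 * (b0 * b4))) := by rw [H b4 b3 b0]
    _ = b1 * (((b0 * b4) * b2) * b3) := by rw [← H (b0 * b4) b2 b3]
    _ = (b3 * b1) * ((b0 * b4) * b2) := by rw [← H b3 b1 ((b0 * b4) * b2)]
    _ = (b3 * b1) * (b4 * (b2 * b0)) := by rw [H b0 b4 b2]
    _ = ((b2 * b0) * (b3 * b1)) * b4 := by rw [← H (b2 * b0) (b3 * b1) b4]
    _ = ((b1 * (b2 * b0)) * b3) * b4 := by rw [← H b1 (b2 * b0) b3]
    _ = (((b0 * b1) * b2) * b3) * b4 := by rw [← H b0 b1 b2]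

lemma swap_lem23 (H : ∀ x y z : G, x * y * z = y * (z * x)) (b0 b1 b2 b3 b4 : G) : (((b0 * b1) * b3) * b2) * b4 = (((b0 * b1) * b2) * b3) * b4 := by
  calc (((b0 * b1) * b3) * b2) * b4 = b2 * (b4 * ((b0 * b1) * b3)) := by rw [H ((b0 * b1) * b3) b2 b4]
    _ = b2 * ((b3 * b4) * (b0 * b1)) := by rw [← H b3 b4 (b0 * b1)]
    _ = ((b0 * b1) * b2) * (b3 * b4) := by rw [← H (b0 * b1) b2 (b3 * b4)]
    _ = (b4 * ((b0 * b1) * b2)) * b3 := by rw [← H b4 ((b0 * b1) * b2) b3]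
    _ = (b4 * (b1 * (b2 * b0))) * b3 := by rw [H b0 b1 b2]
    _ = (((b2 * b0) * b4) * b1) * b3 := by rw [← H (b2 * b0) b4 b1]
    _ = b1 * (b3 * ((b2 * b0) * b4)) := by rw [H ((b2 * b0) * b4) b1 b3]
    _ = b1 * (b3 * (b0 * (b4 * b2))) := by rw [H b2 b0 b4]
    _ = b1 * (((b4 * b2) * b3) * b0) := by rw [← H (b4 * b2) b3 b0]
    _ = (b0 * b1) * ((b4 * b2) * b3) := by rw [← H b0 b1 ((b4 * b2) * b3)]
    _ = (b3 * (b0 * b1)) * (b4 * b2) := by rw [← H b3 (b0 * b1) (b4 * b2)]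
    _ = (b2 * (b3 * (b0 * b1))) * b4 := by rw [← H b2 (b3 * (b0 * b1)) b4]
    _ = (((b0 * b1) * b2) * b3) * b4 := by rw [← H (b0 * b1) b2 b3]

lemma swap_lem24 (H : ∀ x y z : G, x * y * z = y * (z * x)) (b0 b1 b2 b3 b4 : G) : (((b0 * b1) * b4) * b3) * b2 = (((b0 * b1) * b2) * b3) * b4 := by
  calc (((b0 * b1) * b4) * b3) * b2 = (b4 * (b3 * (b0 * b1))) * b2 := by rw [H (b0 * b1) b4 b3]
    _ = (b4 * ((b1 * b3) * b0)) * b2 := by rw [← H b1 b3 b0]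
    _ = ((b0 * b4) * (b1 * b3)) * b2 := by rw [← H b0 b4 (b1 * b3)]
    _ = ((b3 * (b0 * b4)) * b1) * b2 := by rw [← H b3 (b0 * b4) b1]
    _ = b1 * (b2 * (b3 * (b0 * b4))) := by rw [H (b3 * (b0 * b4)) b1 b2]
    _ = b1 * (((b0 * b4) * b2) * b3) := by rw [← H (b0 * b4) b2 b3]
    _ = (b3 * b1) * ((b0 * b4) * b2) := by rw [← H b3 b1 ((b0 * b4) * b2)]
    _ = (b3 * b1) * (b4 * (b2 * b0)) := by rw [H b0 b4 b2]
    _ = ((b2 * b0) * (b3 * b1)) * b4 := by rw [← H (b2 * b0) (b3 * b1) b4]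
    _ = ((b1 * (b2 * b0)) * b3) * b4 := by rw [← H b1 (b2 * b0) b3]
    _ = (((b0 * b1) * b2) * b3) * b4 := by rw [← H b0 b1 b2]

lemma swap_lem34 (H : ∀ x y z : G, x * y * z = y * (z * x)) (b0 b1 b2 b3 b4 : G) : (((b0 * b1) * b2) * b4) * b3 = (((b0 * b1) * b2) * b3) * b4 := by
  calc (((b0 * b1) * b2) * b4) * b3 = b4 * (b3 * ((b0 * b1) * b2)) := by rw [H ((b0 * b1) * b2) b4 b3]
    _ = b4 * (b3 * (b1 * (b2 * b0))) := by rw [H b0 b1 b2]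
    _ = b4 * (((b2 * b0) * b3) * b1) := by rw [← H (b2 * b0) b3 b1]
    _ = (b1 * b4) * ((b2 * b0) * b3) := by rw [← H b1 b4 ((b2 * b0) * b3)]
    _ = (b3 * (b1 * b4)) * (b2 * b0) := by rw [← H b3 (b1 * b4) (b2 * b0)]
    _ = (b0 * (b3 * (b1 * b4))) * b2 := by rw [← H b0 (b3 * (b1 * b4)) b2]
    _ = (((b1 * b4) * b0) * b3) * b2 := by rw [← H (b1 * b4) b0 b3]
    _ = b3 * (b2 * ((b1 * b4) * b0)) := by rw [H ((b1 * b4) * b0) b3 b2]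
    _ = b3 * ((b0 * b2) * (b1 * b4)) := by rw [← H b0 b2 (b1 * b4)]
    _ = b3 * ((b4 * (b0 * b2)) * b1) := by rw [← H b4 (b0 * b2) b1]
    _ = (b1 * b3) * (b4 * (b0 * b2)) := by rw [← H b1 b3 (b4 * (b0 * b2))]
    _ = ((b0 * b2) * (b1 * b3)) * b4 := by rw [← H (b0 * b2) (b1 * b3) b4]
    _ = (b2 * ((b1 * b3) * b0)) * b4 := by rw [H b0 b2 (b1 * b3)]
    _ = (b2 * (b3 * (b0 * b1))) * b4 := by rw [H b1 b3 b0]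
    _ = (((b0 * b1) * b2) * b3) * b4 := by rw [← H (b0 * b1) b2 b3]


lemma shape5 (H : ∀ x y z : G, x * y * z = y * (z * x)) (s : Brack) (h5 : s.leaves = 5) (b : ℕ → G) : s.eval b 0 = Pfive b := by
  cases s with
  | leaf => simp [Brack.leaves] at h5
  | node l r =>
    have h1 := l.leaves_pos; have h2 := r.leaves_pos
    have hsum : l.leaves + r.leaves = 5 := h5
    have hcase : l.leaves = 1 ∨ l.leaves = 2 ∨ l.leaves = 3 ∨ l.leaves = 4 := by omega
    rcases hcase with h | h | h | h
    · obtain rfl := cls1 l h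
      rcases cls4 r (by omega) with rfl | rfl | rfl | rfl | rfl
      · simpa [Brack.eval, Brack.leaves, Pfive] using
          shape_lem1 H (b 0) (b 1) (b 2) (b 3) (b 4)
      · simpa [Brack.eval, Brack.leaves, Pfive] using
          shape_lem2 H (b 0) (b 1) (b 2) (b 3) (b 4)
      · simpa [Brack.eval, Brack.leaves, Pfive] using
          shape_lem3 H (b 0) (b 1) (b 2) (b 3) (b 4)
      · simpa [Brack.eval, Brack.leaves, Pfive] using
          shape_lem4 H (b 0) (b 1) (b 2) (b 3) (b 4)
      · simpa [Brack.eval, Brack.leaves, Pfive] using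
          shape_lem5 H (b 0) (b 1) (b 2) (b 3) (b 4)
    · obtain rfl := cls2 l h
      rcases cls3 r (by omega) with rfl | rfl
      · simpa [Brack.eval, Brack.leaves, Pfive] using
          shape_lem7 H (b 0) (b 1) (b 2) (b 3) (b 4)
      · simpa [Brack.eval, Brack.leaves, Pfive] using
          shape_lem6 H (b 0) (b 1) (b 2) (b 3) (b 4)
    · obtain rfl := cls2 r (by omega)
      rcases cls3 l h with rfl | rfl
      · simpa [Brack.eval, Brack.leaves, Pfive] using
          shape_lem9 H (b 0) (b 1) (b 2) (b 3) (b 4)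
      · simpa [Brack.eval, Brack.leaves, Pfive] using
          shape_lem8 H (b 0) (b 1) (b 2) (b 3) (b 4)
    · obtain rfl := cls1 r (by omega)
      rcases cls4 l h with rfl | rfl | rfl | rfl | rfl
      · simpa [Brack.eval, Brack.leaves, Pfive] using
          shape_lem10 H (b 0) (b 1) (b 2) (b 3) (b 4)
      · simpa [Brack.eval, Brack.leaves, Pfive] using
          shape_lem11 H (b 0) (b 1) (b 2) (b 3) (b 4)
      · simpa [Brack.eval, Brack.leaves, Pfive] using
          shape_lem12 H (b 0) (b 1) (b 2) (b 3) (b 4)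
      · simpa [Brack.eval, Brack.leaves, Pfive] using
          shape_lem13 H (b 0) (b 1) (b 2) (b 3) (b 4)
      · simp [Brack.eval, Brack.leaves, Pfive]

lemma swapP (H : ∀ x y z : G, x * y * z = y * (z * x)) (x y : Fin 5) (b : ℕ → G) :
    Pfive (fun i => b (permNat (Equiv.swap x y) i)) = Pfive b := by
  obtain ⟨i, hi⟩ := x
  obtain ⟨j, hj⟩ := y
  interval_cases i <;> interval_cases j <;> simp only [Pfive]
  ·
    rw [show permNat (Equiv.swap (⟨0, by decide⟩ : Fin 5) ⟨0, by decide⟩) 0 = 0 from by decide]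
    rw [show permNat (Equiv.swap (⟨0, by decide⟩ : Fin 5) ⟨0, by decide⟩) 1 = 1 from by decide]
    rw [show permNat (Equiv.swap (⟨0, by decide⟩ : Fin 5) ⟨0, by decide⟩) 2 = 2 from by decide]
    rw [show permNat (Equiv.swap (⟨0, by decide⟩ : Fin 5) ⟨0, by decide⟩) 3 = 3 from by decide]
    rw [show permNat (Equiv.swap (⟨0, by decide⟩ : Fin 5) ⟨0, by decide⟩) 4 = 4 from by decide]
    
  ·
    rw [show permNat (Equiv.swap (⟨0, by decide⟩ : Fin 5) ⟨1, by decide⟩) 0 = 1 from by decide]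
    rw [show permNat (Equiv.swap (⟨0, by decide⟩ : Fin 5) ⟨1, by decide⟩) 1 = 0 from by decide]
    rw [show permNat (Equiv.swap (⟨0, by decide⟩ : Fin 5) ⟨1, by decide⟩) 2 = 2 from by decide]
    rw [show permNat (Equiv.swap (⟨0, by decide⟩ : Fin 5) ⟨1, by decide⟩) 3 = 3 from by decide]
    rw [show permNat (Equiv.swap (⟨0, by decide⟩ : Fin 5) ⟨1, by decide⟩) 4 = 4 from by decide]
    exact swap_lem01 H (b 0) (b 1) (b 2) (b 3) (b 4)
  ·
    rw [show permNat (Equiv.swap (⟨0, by decide⟩ : Fin 5) ⟨2, by decide⟩) 0 = 2 from by decide]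
    rw [show permNat (Equiv.swap (⟨0, by decide⟩ : Fin 5) ⟨2, by decide⟩) 1 = 1 from by decide]
    rw [show permNat (Equiv.swap (⟨0, by decide⟩ : Fin 5) ⟨2, by decide⟩) 2 = 0 from by decide]
    rw [show permNat (Equiv.swap (⟨0, by decide⟩ : Fin 5) ⟨2, by decide⟩) 3 = 3 from by decide]
    rw [show permNat (Equiv.swap (⟨0, by decide⟩ : Fin 5) ⟨2, by decide⟩) 4 = 4 from by decide]
    exact swap_lem02 H (b 0) (b 1) (b 2) (b 3) (b 4)
  ·
    rw [show permNat (Equiv.swap (⟨0, by decide⟩ : Fin 5) ⟨3, by decide⟩) 0 = 3 from by decide]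
    rw [show permNat (Equiv.swap (⟨0, by decide⟩ : Fin 5) ⟨3, by decide⟩) 1 = 1 from by decide]
    rw [show permNat (Equiv.swap (⟨0, by decide⟩ : Fin 5) ⟨3, by decide⟩) 2 = 2 from by decide]
    rw [show permNat (Equiv.swap (⟨0, by decide⟩ : Fin 5) ⟨3, by decide⟩) 3 = 0 from by decide]
    rw [show permNat (Equiv.swap (⟨0, by decide⟩ : Fin 5) ⟨3, by decide⟩) 4 = 4 from by decide]
    exact swap_lem03 H (b 0) (b 1) (b 2) (b 3) (b 4)
  ·
    rw [show permNat (Equiv.swap (⟨0, by decide⟩ : Fin 5) ⟨4, by decide⟩) 0 = 4 from by decide]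
    rw [show permNat (Equiv.swap (⟨0, by decide⟩ : Fin 5) ⟨4, by decide⟩) 1 = 1 from by decide]
    rw [show permNat (Equiv.swap (⟨0, by decide⟩ : Fin 5) ⟨4, by decide⟩) 2 = 2 from by decide]
    rw [show permNat (Equiv.swap (⟨0, by decide⟩ : Fin 5) ⟨4, by decide⟩) 3 = 3 from by decide]
    rw [show permNat (Equiv.swap (⟨0, by decide⟩ : Fin 5) ⟨4, by decide⟩) 4 = 0 from by decide]
    exact swap_lem04 H (b 0) (b 1) (b 2) (b 3) (b 4)
  ·
    rw [show permNat (Equiv.swap (⟨1, by decide⟩ : Fin 5) ⟨0, by decide⟩) 0 = 1 from by decide]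
    rw [show permNat (Equiv.swap (⟨1, by decide⟩ : Fin 5) ⟨0, by decide⟩) 1 = 0 from by decide]
    rw [show permNat (Equiv.swap (⟨1, by decide⟩ : Fin 5) ⟨0, by decide⟩) 2 = 2 from by decide]
    rw [show permNat (Equiv.swap (⟨1, by decide⟩ : Fin 5) ⟨0, by decide⟩) 3 = 3 from by decide]
    rw [show permNat (Equiv.swap (⟨1, by decide⟩ : Fin 5) ⟨0, by decide⟩) 4 = 4 from by decide]
    exact swap_lem01 H (b 0) (b 1) (b 2) (b 3) (b 4)
  ·
    rw [show permNat (Equiv.swap (⟨1, by decide⟩ : Fin 5) ⟨1, by decide⟩) 0 = 0 from by decide]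
    rw [show permNat (Equiv.swap (⟨1, by decide⟩ : Fin 5) ⟨1, by decide⟩) 1 = 1 from by decide]
    rw [show permNat (Equiv.swap (⟨1, by decide⟩ : Fin 5) ⟨1, by decide⟩) 2 = 2 from by decide]
    rw [show permNat (Equiv.swap (⟨1, by decide⟩ : Fin 5) ⟨1, by decide⟩) 3 = 3 from by decide]
    rw [show permNat (Equiv.swap (⟨1, by decide⟩ : Fin 5) ⟨1, by decide⟩) 4 = 4 from by decide]
    
  ·
    rw [show permNat (Equiv.swap (⟨1, by decide⟩ : Fin 5) ⟨2, by decide⟩) 0 = 0 from by decide]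
    rw [show permNat (Equiv.swap (⟨1, by decide⟩ : Fin 5) ⟨2, by decide⟩) 1 = 2 from by decide]
    rw [show permNat (Equiv.swap (⟨1, by decide⟩ : Fin 5) ⟨2, by decide⟩) 2 = 1 from by decide]
    rw [show permNat (Equiv.swap (⟨1, by decide⟩ : Fin 5) ⟨2, by decide⟩) 3 = 3 from by decide]
    rw [show permNat (Equiv.swap (⟨1, by decide⟩ : Fin 5) ⟨2, by decide⟩) 4 = 4 from by decide]
    exact swap_lem12 H (b 0) (b 1) (b 2) (b 3) (b 4)
  ·
    rw [show permNat (Equiv.swap (⟨1, by decide⟩ : Fin 5) ⟨3, by decide⟩) 0 = 0 from by decide]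
    rw [show permNat (Equiv.swap (⟨1, by decide⟩ : Fin 5) ⟨3, by decide⟩) 1 = 3 from by decide]
    rw [show permNat (Equiv.swap (⟨1, by decide⟩ : Fin 5) ⟨3, by decide⟩) 2 = 2 from by decide]
    rw [show permNat (Equiv.swap (⟨1, by decide⟩ : Fin 5) ⟨3, by decide⟩) 3 = 1 from by decide]
    rw [show permNat (Equiv.swap (⟨1, by decide⟩ : Fin 5) ⟨3, by decide⟩) 4 = 4 from by decide]
    exact swap_lem13 H (b 0) (b 1) (b 2) (b 3) (b 4)
  ·
    rw [show permNat (Equiv.swap (⟨1, by decide⟩ : Fin 5) ⟨4, by decide⟩) 0 = 0 from by decide]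
    rw [show permNat (Equiv.swap (⟨1, by decide⟩ : Fin 5) ⟨4, by decide⟩) 1 = 4 from by decide]
    rw [show permNat (Equiv.swap (⟨1, by decide⟩ : Fin 5) ⟨4, by decide⟩) 2 = 2 from by decide]
    rw [show permNat (Equiv.swap (⟨1, by decide⟩ : Fin 5) ⟨4, by decide⟩) 3 = 3 from by decide]
    rw [show permNat (Equiv.swap (⟨1, by decide⟩ : Fin 5) ⟨4, by decide⟩) 4 = 1 from by decide]
    exact swap_lem14 H (b 0) (b 1) (b 2) (b 3) (b 4)
  ·
    rw [show permNat (Equiv.swap (⟨2, by decide⟩ : Fin 5) ⟨0, by decide⟩) 0 = 2 from by decide]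
    rw [show permNat (Equiv.swap (⟨2, by decide⟩ : Fin 5) ⟨0, by decide⟩) 1 = 1 from by decide]
    rw [show permNat (Equiv.swap (⟨2, by decide⟩ : Fin 5) ⟨0, by decide⟩) 2 = 0 from by decide]
    rw [show permNat (Equiv.swap (⟨2, by decide⟩ : Fin 5) ⟨0, by decide⟩) 3 = 3 from by decide]
    rw [show permNat (Equiv.swap (⟨2, by decide⟩ : Fin 5) ⟨0, by decide⟩) 4 = 4 from by decide]
    exact swap_lem02 H (b 0) (b 1) (b 2) (b 3) (b 4)
  ·
    rw [show permNat (Equiv.swap (⟨2, by decide⟩ : Fin 5) ⟨1, by decide⟩) 0 = 0 from by decide]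
    rw [show permNat (Equiv.swap (⟨2, by decide⟩ : Fin 5) ⟨1, by decide⟩) 1 = 2 from by decide]
    rw [show permNat (Equiv.swap (⟨2, by decide⟩ : Fin 5) ⟨1, by decide⟩) 2 = 1 from by decide]
    rw [show permNat (Equiv.swap (⟨2, by decide⟩ : Fin 5) ⟨1, by decide⟩) 3 = 3 from by decide]
    rw [show permNat (Equiv.swap (⟨2, by decide⟩ : Fin 5) ⟨1, by decide⟩) 4 = 4 from by decide]
    exact swap_lem12 H (b 0) (b 1) (b 2) (b 3) (b 4)
  ·
    rw [show permNat (Equiv.swap (⟨2, by decide⟩ : Fin 5) ⟨2, by decide⟩) 0 = 0 from by decide]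
    rw [show permNat (Equiv.swap (⟨2, by decide⟩ : Fin 5) ⟨2, by decide⟩) 1 = 1 from by decide]
    rw [show permNat (Equiv.swap (⟨2, by decide⟩ : Fin 5) ⟨2, by decide⟩) 2 = 2 from by decide]
    rw [show permNat (Equiv.swap (⟨2, by decide⟩ : Fin 5) ⟨2, by decide⟩) 3 = 3 from by decide]
    rw [show permNat (Equiv.swap (⟨2, by decide⟩ : Fin 5) ⟨2, by decide⟩) 4 = 4 from by decide]
    
  ·
    rw [show permNat (Equiv.swap (⟨2, by decide⟩ : Fin 5) ⟨3, by decide⟩) 0 = 0 from by decide]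
    rw [show permNat (Equiv.swap (⟨2, by decide⟩ : Fin 5) ⟨3, by decide⟩) 1 = 1 from by decide]
    rw [show permNat (Equiv.swap (⟨2, by decide⟩ : Fin 5) ⟨3, by decide⟩) 2 = 3 from by decide]
    rw [show permNat (Equiv.swap (⟨2, by decide⟩ : Fin 5) ⟨3, by decide⟩) 3 = 2 from by decide]
    rw [show permNat (Equiv.swap (⟨2, by decide⟩ : Fin 5) ⟨3, by decide⟩) 4 = 4 from by decide]
    exact swap_lem23 H (b 0) (b 1) (b 2) (b 3) (b 4)
  ·
    rw [show permNat (Equiv.swap (⟨2, by decide⟩ : Fin 5) ⟨4, by decide⟩) 0 = 0 from by decide]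
    rw [show permNat (Equiv.swap (⟨2, by decide⟩ : Fin 5) ⟨4, by decide⟩) 1 = 1 from by decide]
    rw [show permNat (Equiv.swap (⟨2, by decide⟩ : Fin 5) ⟨4, by decide⟩) 2 = 4 from by decide]
    rw [show permNat (Equiv.swap (⟨2, by decide⟩ : Fin 5) ⟨4, by decide⟩) 3 = 3 from by decide]
    rw [show permNat (Equiv.swap (⟨2, by decide⟩ : Fin 5) ⟨4, by decide⟩) 4 = 2 from by decide]
    exact swap_lem24 H (b 0) (b 1) (b 2) (b 3) (b 4)
  ·
    rw [show permNat (Equiv.swap (⟨3, by decide⟩ : Fin 5) ⟨0, by decide⟩) 0 = 3 from by decide]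
    rw [show permNat (Equiv.swap (⟨3, by decide⟩ : Fin 5) ⟨0, by decide⟩) 1 = 1 from by decide]
    rw [show permNat (Equiv.swap (⟨3, by decide⟩ : Fin 5) ⟨0, by decide⟩) 2 = 2 from by decide]
    rw [show permNat (Equiv.swap (⟨3, by decide⟩ : Fin 5) ⟨0, by decide⟩) 3 = 0 from by decide]
    rw [show permNat (Equiv.swap (⟨3, by decide⟩ : Fin 5) ⟨0, by decide⟩) 4 = 4 from by decide]
    exact swap_lem03 H (b 0) (b 1) (b 2) (b 3) (b 4)
  ·
    rw [show permNat (Equiv.swap (⟨3, by decide⟩ : Fin 5) ⟨1, by decide⟩) 0 = 0 from by decide]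
    rw [show permNat (Equiv.swap (⟨3, by decide⟩ : Fin 5) ⟨1, by decide⟩) 1 = 3 from by decide]
    rw [show permNat (Equiv.swap (⟨3, by decide⟩ : Fin 5) ⟨1, by decide⟩) 2 = 2 from by decide]
    rw [show permNat (Equiv.swap (⟨3, by decide⟩ : Fin 5) ⟨1, by decide⟩) 3 = 1 from by decide]
    rw [show permNat (Equiv.swap (⟨3, by decide⟩ : Fin 5) ⟨1, by decide⟩) 4 = 4 from by decide]
    exact swap_lem13 H (b 0) (b 1) (b 2) (b 3) (b 4)
  ·
    rw [show permNat (Equiv.swap (⟨3, by decide⟩ : Fin 5) ⟨2, by decide⟩) 0 = 0 from by decide]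
    rw [show permNat (Equiv.swap (⟨3, by decide⟩ : Fin 5) ⟨2, by decide⟩) 1 = 1 from by decide]
    rw [show permNat (Equiv.swap (⟨3, by decide⟩ : Fin 5) ⟨2, by decide⟩) 2 = 3 from by decide]
    rw [show permNat (Equiv.swap (⟨3, by decide⟩ : Fin 5) ⟨2, by decide⟩) 3 = 2 from by decide]
    rw [show permNat (Equiv.swap (⟨3, by decide⟩ : Fin 5) ⟨2, by decide⟩) 4 = 4 from by decide]
    exact swap_lem23 H (b 0) (b 1) (b 2) (b 3) (b 4)
  ·
    rw [show permNat (Equiv.swap (⟨3, by decide⟩ : Fin 5) ⟨3, by decide⟩) 0 = 0 from by decide]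
    rw [show permNat (Equiv.swap (⟨3, by decide⟩ : Fin 5) ⟨3, by decide⟩) 1 = 1 from by decide]
    rw [show permNat (Equiv.swap (⟨3, by decide⟩ : Fin 5) ⟨3, by decide⟩) 2 = 2 from by decide]
    rw [show permNat (Equiv.swap (⟨3, by decide⟩ : Fin 5) ⟨3, by decide⟩) 3 = 3 from by decide]
    rw [show permNat (Equiv.swap (⟨3, by decide⟩ : Fin 5) ⟨3, by decide⟩) 4 = 4 from by decide]
    
  ·
    rw [show permNat (Equiv.swap (⟨3, by decide⟩ : Fin 5) ⟨4, by decide⟩) 0 = 0 from by decide]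
    rw [show permNat (Equiv.swap (⟨3, by decide⟩ : Fin 5) ⟨4, by decide⟩) 1 = 1 from by decide]
    rw [show permNat (Equiv.swap (⟨3, by decide⟩ : Fin 5) ⟨4, by decide⟩) 2 = 2 from by decide]
    rw [show permNat (Equiv.swap (⟨3, by decide⟩ : Fin 5) ⟨4, by decide⟩) 3 = 4 from by decide]
    rw [show permNat (Equiv.swap (⟨3, by decide⟩ : Fin 5) ⟨4, by decide⟩) 4 = 3 from by decide]
    exact swap_lem34 H (b 0) (b 1) (b 2) (b 3) (b 4)
  ·
    rw [show permNat (Equiv.swap (⟨4, by decide⟩ : Fin 5) ⟨0, by decide⟩) 0 = 4 from by decide]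
    rw [show permNat (Equiv.swap (⟨4, by decide⟩ : Fin 5) ⟨0, by decide⟩) 1 = 1 from by decide]
    rw [show permNat (Equiv.swap (⟨4, by decide⟩ : Fin 5) ⟨0, by decide⟩) 2 = 2 from by decide]
    rw [show permNat (Equiv.swap (⟨4, by decide⟩ : Fin 5) ⟨0, by decide⟩) 3 = 3 from by decide]
    rw [show permNat (Equiv.swap (⟨4, by decide⟩ : Fin 5) ⟨0, by decide⟩) 4 = 0 from by decide]
    exact swap_lem04 H (b 0) (b 1) (b 2) (b 3) (b 4)
  ·
    rw [show permNat (Equiv.swap (⟨4, by decide⟩ : Fin 5) ⟨1, by decide⟩) 0 = 0 from by decide]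
    rw [show permNat (Equiv.swap (⟨4, by decide⟩ : Fin 5) ⟨1, by decide⟩) 1 = 4 from by decide]
    rw [show permNat (Equiv.swap (⟨4, by decide⟩ : Fin 5) ⟨1, by decide⟩) 2 = 2 from by decide]
    rw [show permNat (Equiv.swap (⟨4, by decide⟩ : Fin 5) ⟨1, by decide⟩) 3 = 3 from by decide]
    rw [show permNat (Equiv.swap (⟨4, by decide⟩ : Fin 5) ⟨1, by decide⟩) 4 = 1 from by decide]
    exact swap_lem14 H (b 0) (b 1) (b 2) (b 3) (b 4)
  ·
    rw [show permNat (Equiv.swap (⟨4, by decide⟩ : Fin 5) ⟨2, by decide⟩) 0 = 0 from by decide]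
    rw [show permNat (Equiv.swap (⟨4, by decide⟩ : Fin 5) ⟨2, by decide⟩) 1 = 1 from by decide]
    rw [show permNat (Equiv.swap (⟨4, by decide⟩ : Fin 5) ⟨2, by decide⟩) 2 = 4 from by decide]
    rw [show permNat (Equiv.swap (⟨4, by decide⟩ : Fin 5) ⟨2, by decide⟩) 3 = 3 from by decide]
    rw [show permNat (Equiv.swap (⟨4, by decide⟩ : Fin 5) ⟨2, by decide⟩) 4 = 2 from by decide]
    exact swap_lem24 H (b 0) (b 1) (b 2) (b 3) (b 4)
  ·
    rw [show permNat (Equiv.swap (⟨4, by decide⟩ : Fin 5) ⟨3, by decide⟩) 0 = 0 from by decide]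
    rw [show permNat (Equiv.swap (⟨4, by decide⟩ : Fin 5) ⟨3, by decide⟩) 1 = 1 from by decide]
    rw [show permNat (Equiv.swap (⟨4, by decide⟩ : Fin 5) ⟨3, by decide⟩) 2 = 2 from by decide]
    rw [show permNat (Equiv.swap (⟨4, by decide⟩ : Fin 5) ⟨3, by decide⟩) 3 = 4 from by decide]
    rw [show permNat (Equiv.swap (⟨4, by decide⟩ : Fin 5) ⟨3, by decide⟩) 4 = 3 from by decide]
    exact swap_lem34 H (b 0) (b 1) (b 2) (b 3) (b 4)
  ·
    rw [show permNat (Equiv.swap (⟨4, by decide⟩ : Fin 5) ⟨4, by decide⟩) 0 = 0 from by decide]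
    rw [show permNat (Equiv.swap (⟨4, by decide⟩ : Fin 5) ⟨4, by decide⟩) 1 = 1 from by decide]
    rw [show permNat (Equiv.swap (⟨4, by decide⟩ : Fin 5) ⟨4, by decide⟩) 2 = 2 from by decide]
    rw [show permNat (Equiv.swap (⟨4, by decide⟩ : Fin 5) ⟨4, by decide⟩) 3 = 3 from by decide]
    rw [show permNat (Equiv.swap (⟨4, by decide⟩ : Fin 5) ⟨4, by decide⟩) 4 = 4 from by decide]
    

lemma permP (H : ∀ x y z : G, x * y * z = y * (z * x)) (h : Equiv.Perm (Fin 5)) :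
    ∀ b : ℕ → G, Pfive (fun i => b (permNat h i)) = Pfive b := by
  refine Equiv.Perm.swap_induction_on h ?_ ?_
  · intro b
    have e : (fun i => b (permNat (1 : Equiv.Perm (Fin 5)) i)) = b := by
      funext i; rw [permNat_one]
    rw [e]
  · intro p y z hyz IH b
    have e : (fun i => b (permNat (Equiv.swap y z * p) i)) =
        (fun i => (fun j => b (permNat (Equiv.swap y z) j)) (permNat p i)) := by
      funext i; rw [permNat_mul]
    rw [e]
    exact (IH (fun j => b (permNat (Equiv.swap y z) j))).trans (swapP H y z b)

lemma acnice5 (H : ∀ x y z : G, x * y * z = y * (z * x)) : ACnice G 5 := by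
  intro a s t hs ht f g
  rw [shape5 H s hs, shape5 H t ht, permP H f, permP H g]

end Good

/-! ### Deriving the pointwise law from `Satisfies` -/

lemma hmul_of_sat1 {G : Type*} [Mul G]
    (h : Satisfies G (Brack.node (.node .leaf .leaf) .leaf)
      (Brack.node .leaf (.node .leaf .leaf)) (finRotate 3)) :
    ∀ x y z : G, x * y * z = y * (z * x) := by
  intro x y z
  have e0 : permNat (finRotate 3) 0 = 1 := by decide
  have e1 : permNat (finRotate 3) 1 = 2 := by decide
  have e2 : permNat (finRotate 3) 2 = 0 := by decide
  have := h (fun i => if i = 0 then x else if i = 1 then y else z)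
  simp only [Brack.eval, Brack.leaves] at this
  norm_num [e0, e1, e2] at this
  exact this

lemma hmul_of_sat2 {G : Type*} [Mul G]
    (h : Satisfies G (Brack.node .leaf (.node .leaf .leaf))
      (Brack.node (.node .leaf .leaf) .leaf) (finRotate 3)⁻¹) :
    ∀ x y z : G, x * y * z = y * (z * x) := by
  have law : ∀ x y z : G, x * (y * z) = (z * x) * y := by
    intro x y z
    have e0 : permNat (finRotate 3)⁻¹ 0 = 2 := by decide
    have e1 : permNat (finRotate 3)⁻¹ 1 = 0 := by decide
    have e2 : permNat (finRotate 3)⁻¹ 2 = 1 := by decide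
    have := h (fun i => if i = 0 then x else if i = 1 then y else z)
    simp only [Brack.eval, Brack.leaves] at this
    norm_num [e0, e1, e2] at this
    exact this
  intro x y z
  exact (law y z x).symm

/-! ### Countermodels -/

universe v

/-- Countermodel carrier: `ℕ` with `x * y = 2x + 2y`. -/
structure W1 : Type v where n : ULift.{v} ℕ

instance : Mul W1.{v} := ⟨fun x y => ⟨⟨2 * x.n.down + 2 * y.n.down⟩⟩⟩

def w1 (k : ℕ) : W1.{v} := ⟨⟨k⟩⟩

lemma w1_inj {p q : ℕ} (h : (w1.{v} p) = w1 q) : p = q := congrArg (fun x => x.n.down) h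

lemma w1_mul (p q : ℕ) : (w1.{v} p) * w1 q = w1 (2 * p + 2 * q) := rfl

lemma w1_mul_down (x y : W1.{v}) : (x * y).n.down = 2 * x.n.down + 2 * y.n.down := rfl

lemma w1_ext {x y : W1.{v}} (h : x.n.down = y.n.down) : x = y := by
  cases x with | _ a => cases y with | _ b => cases a; cases b; cases h; rfl

def a1 : ℕ → W1.{v} := fun i => w1 (if i = 0 then 1 else 0)

lemma a1_pos (k : ℕ) (hk : 1 ≤ k) : a1.{v} k = w1 0 := by
  unfold a1; rw [if_neg (by omega)]

lemma w1_zero (s : Brack) : ∀ k : ℕ, 1 ≤ k → s.eval a1.{v} k = w1 0 := by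
  induction s with
  | leaf =>
    intro k hk
    show a1 k = w1 0
    unfold a1
    rw [if_neg (by omega)]
  | node l r ihl ihr =>
    intro k hk
    show l.eval a1 k * r.eval a1 (k + l.leaves) = w1 0
    rw [ihl k hk, ihr (k + l.leaves) (by omega), w1_mul]

lemma w1_lc : ∀ n : ℕ, (LC (n + 1)).eval a1.{v} 0 = w1 (2 ^ (n + 1)) := by
  intro n
  induction n with
  | zero =>
    show a1 0 * a1 (0 + (LC 0).leaves) = w1 2
    have : (LC 0).leaves = 1 := rfl
    rw [this]
    show w1 1 * w1 0 = w1 2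
    rw [w1_mul]
  | succ n ih =>
    show (LC (n + 1)).eval a1 0 * a1 (0 + (LC (n + 1)).leaves) = _
    rw [ih, LC_leaves, a1_pos (0 + (n + 1 + 1)) (by omega), w1_mul]
    congr 1
    ring

lemma w1_rc : ∀ n : ℕ, (RC (n + 1)).eval a1.{v} 0 = w1 2 := by
  intro n
  show a1 0 * (RC n).eval a1 (0 + Brack.leaf.leaves) = w1 2
  rw [w1_zero (RC n) _ (by simp [Brack.leaves])]
  show w1 1 * w1 0 = w1 2
  rw [w1_mul]

lemma notNice1 : ∀ m, 3 ≤ m → ¬ ACnice W1.{v} m := by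
  intro m hm h
  obtain ⟨k, rfl⟩ : ∃ k, m = k + 3 := ⟨m - 3, by omega⟩
  have := h a1 (LC (k + 2)) (RC (k + 2)) (by rw [LC_leaves]) (by rw [RC_leaves]) 1 1
  have heq : (fun i => a1.{v} (permNat (1 : Equiv.Perm (Fin (k + 3))) i)) = a1 := by
    funext i; rw [permNat_one]
  rw [heq, w1_lc, w1_rc] at this
  have h2 := w1_inj this
  have h3 : 2 ^ 2 ≤ 2 ^ (k + 2) := Nat.pow_le_pow_right (by norm_num) (by omega)
  omega

lemma noUlt1 : ¬ ∃ m, 3 ≤ m ∧ ACnice W1.{v} m := by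
  rintro ⟨m, hm, hn⟩; exact notNice1 m hm hn

/-- Countermodel carrier: left projection `x * y = x`. -/
structure W2 : Type v where n : ULift.{v} ℕ

instance : Mul W2.{v} := ⟨fun x _ => x⟩

lemma w2_eval (s : Brack) (a : ℕ → W2.{v}) (k : ℕ) : s.eval a k = a k := by
  induction s generalizing k with
  | leaf => rfl
  | node l r ihl ihr =>
    show l.eval a k * r.eval a (k + l.leaves) = a k
    rw [ihl]
    rfl

lemma notNice2 : ∀ m, 3 ≤ m → ¬ ACnice W2.{v} m := by
  intro m hm h
  have e1 : permNat (Equiv.swap (⟨0, by omega⟩ : Fin m) ⟨1, by omega⟩) 0 = 1 := by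
    rw [permNat_mk _ 0 (by omega), Equiv.swap_apply_left]
  have key := h (fun i => (⟨⟨i⟩⟩ : W2.{v})) (LC (m - 1)) (LC (m - 1))
    (by rw [LC_leaves]; omega) (by rw [LC_leaves]; omega)
    1 (Equiv.swap ⟨0, by omega⟩ ⟨1, by omega⟩)
  rw [w2_eval, w2_eval] at key
  simp only [permNat_one, e1] at key
  exact absurd (congrArg (fun x : W2.{v} => x.n.down) key) (by simp)

lemma noUlt2 : ¬ ∃ m, 3 ≤ m ∧ ACnice W2.{v} m := by
  rintro ⟨m, hm, hn⟩; exact notNice2 m hm hn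

/-- Countermodel carrier: right projection `x * y = y`. -/
structure W3 : Type v where n : ULift.{v} ℕ

instance : Mul W3.{v} := ⟨fun _ y => y⟩

lemma w3_eval (s : Brack) (a : ℕ → W3.{v}) : ∀ k : ℕ, s.eval a k = a (k + s.leaves - 1) := by
  induction s with
  | leaf => intro k; rfl
  | node l r ihl ihr =>
    intro k
    show l.eval a k * r.eval a (k + l.leaves) = a (k + (Brack.node l r).leaves - 1)
    rw [ihr]
    show a (k + l.leaves + r.leaves - 1) = a (k + (l.leaves + r.leaves) - 1)
    congr 1
    omega

lemma notNice3 : ∀ m, 3 ≤ m → ¬ ACnice W3.{v} m := by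
  intro m hm h
  obtain ⟨k, rfl⟩ : ∃ k, m = k + 3 := ⟨m - 3, by omega⟩
  have key := h (fun i => (⟨⟨i⟩⟩ : W3.{v})) (LC (k + 2)) (LC (k + 2))
    (by rw [LC_leaves]) (by rw [LC_leaves])
    1 (Equiv.swap ⟨0, by omega⟩ ⟨k + 2, by omega⟩)
  rw [w3_eval, w3_eval] at key
  have hidx : 0 + (LC (k + 2)).leaves - 1 = k + 2 := by rw [LC_leaves]; omega
  simp only [permNat_one, hidx] at key
  rw [permNat_mk _ (k + 2) (by omega), Equiv.swap_apply_right] at key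
  have h2 := congrArg (fun x : W3.{v} => x.n.down) key
  simp only at h2
  omega

lemma noUlt3 : ¬ ∃ m, 3 ≤ m ∧ ACnice W3.{v} m := by
  rintro ⟨m, hm, hn⟩; exact notNice3 m hm hn

/-- Countermodel: `x * y = 1` if `(x, y) = (2, 1)`, else `0`. Kills all `(L, L, f)`. -/
structure W4 : Type v where n : ULift.{v} ℕ

instance : Mul W4.{v} := ⟨fun x y => if x.n.down = 2 ∧ y.n.down = 1 then ⟨⟨1⟩⟩ else ⟨⟨0⟩⟩⟩

def w4 (k : ℕ) : W4.{v} := ⟨⟨k⟩⟩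

lemma w4_mul_ne (x y : W4.{v}) : (x * y).n.down ≠ 2 := by
  show (if x.n.down = 2 ∧ y.n.down = 1 then (⟨⟨1⟩⟩ : W4) else ⟨⟨0⟩⟩).n.down ≠ 2
  split <;> simp

lemma w4_left (x y : W4.{v}) (hx : x.n.down ≠ 2) : x * y = w4 0 := by
  show (if x.n.down = 2 ∧ y.n.down = 1 then (⟨⟨1⟩⟩ : W4) else ⟨⟨0⟩⟩) = w4 0
  rw [if_neg (by tauto)]
  rfl

lemma w4_triple (x y z : W4.{v}) : x * y * z = w4 0 := w4_left _ _ (w4_mul_ne x y)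

lemma sat4 (f : Equiv.Perm (Fin 3)) :
    Satisfies W4.{v} (Brack.node (.node .leaf .leaf) .leaf)
      (Brack.node (.node .leaf .leaf) .leaf) f := by
  intro a
  show a 0 * a 1 * _ = _ * _ * _
  rw [w4_triple, w4_triple]

lemma notNice4 : ∀ m, 3 ≤ m → ¬ ACnice W4.{v} m := by
  intro m hm h
  obtain ⟨k, rfl⟩ : ∃ k, m = k + 3 := ⟨m - 3, by omega⟩
  set a : ℕ → W4.{v} := fun i => if i < k + 2 then w4 2 else w4 1 with ha
  have hrc : ∀ n, ∀ j : ℕ, j + n = k + 2 → (RC n).eval a j = w4 1 := by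
    intro n
    induction n with
    | zero =>
      intro j hj
      show a j = w4 1
      rw [ha]; simp only
      rw [if_neg (by omega)]
    | succ n ih =>
      intro j hj
      show a j * (RC n).eval a (j + Brack.leaf.leaves) = w4 1
      have hlv : Brack.leaf.leaves = 1 := rfl
      rw [hlv, ih (j + 1) (by omega)]
      have haj : a j = w4 2 := by rw [ha]; simp only; rw [if_pos (by omega)]
      rw [haj]
      rfl
  have hlc : (LC (k + 2)).eval a 0 = w4 0 := by
    show (LC (k + 1)).eval a 0 * a (0 + (LC (k + 1)).leaves) = w4 0
    apply w4_left
    show ((LC k).eval a 0 * a (0 + (LC k).leaves)).n.down ≠ 2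
    exact w4_mul_ne _ _
  have := h a (LC (k + 2)) (RC (k + 2)) (by rw [LC_leaves]) (by rw [RC_leaves]) 1 1
  have heq : (fun i => a (permNat (1 : Equiv.Perm (Fin (k + 3))) i)) = a := by
    funext i; rw [permNat_one]
  rw [heq, hlc, hrc (k + 2) 0 (by omega)] at this
  have := congrArg (fun x : W4.{v} => x.n.down) this
  simp [w4] at this

lemma noUlt4 : ¬ ∃ m, 3 ≤ m ∧ ACnice W4.{v} m := by
  rintro ⟨m, hm, hn⟩; exact notNice4 m hm hn

/-- Countermodel: `x * y = 1` if `(x, y) = (1, 2)`, else `0`. Kills all `(R, R, f)`. -/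
structure W5 : Type v where n : ULift.{v} ℕ

instance : Mul W5.{v} := ⟨fun x y => if x.n.down = 1 ∧ y.n.down = 2 then ⟨⟨1⟩⟩ else ⟨⟨0⟩⟩⟩

def w5 (k : ℕ) : W5.{v} := ⟨⟨k⟩⟩

lemma w5_mul_ne (x y : W5.{v}) : (x * y).n.down ≠ 2 := by
  show (if x.n.down = 1 ∧ y.n.down = 2 then (⟨⟨1⟩⟩ : W5) else ⟨⟨0⟩⟩).n.down ≠ 2
  split <;> simp

lemma w5_right (x y : W5.{v}) (hy : y.n.down ≠ 2) : x * y = w5 0 := by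
  show (if x.n.down = 1 ∧ y.n.down = 2 then (⟨⟨1⟩⟩ : W5) else ⟨⟨0⟩⟩) = w5 0
  rw [if_neg (by tauto)]
  rfl

lemma w5_triple (x y z : W5.{v}) : x * (y * z) = w5 0 := w5_right _ _ (w5_mul_ne y z)

lemma sat5 (f : Equiv.Perm (Fin 3)) :
    Satisfies W5.{v} (Brack.node .leaf (.node .leaf .leaf))
      (Brack.node .leaf (.node .leaf .leaf)) f := by
  intro a
  show a 0 * (_ * _) = _ * (_ * _)
  rw [w5_triple, w5_triple]

lemma notNice5 : ∀ m, 3 ≤ m → ¬ ACnice W5.{v} m := by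
  intro m hm h
  obtain ⟨k, rfl⟩ : ∃ k, m = k + 3 := ⟨m - 3, by omega⟩
  set a : ℕ → W5.{v} := fun i => if i = 0 then w5 1 else w5 2 with ha
  have hlc : ∀ n, (LC (n + 1)).eval a 0 = w5 1 := by
    intro n
    induction n with
    | zero =>
      show a 0 * a (0 + (LC 0).leaves) = w5 1
      have : (LC 0).leaves = 1 := rfl
      rw [this, ha]
      rfl
    | succ n ih =>
      show (LC (n + 1)).eval a 0 * a (0 + (LC (n + 1)).leaves) = w5 1
      rw [ih, LC_leaves]
      have : a (0 + (n + 1 + 1)) = w5 2 := by rw [ha]; simp only; rw [if_neg (by omega)]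
      rw [this]
      rfl
  have hrc : (RC (k + 2)).eval a 0 = w5 0 := by
    show a 0 * (RC (k + 1)).eval a (0 + Brack.leaf.leaves) = w5 0
    apply w5_right
    show ((RC (k + 1)).eval a (0 + Brack.leaf.leaves)).n.down ≠ 2
    show (a (0 + Brack.leaf.leaves) * (RC k).eval a _).n.down ≠ 2
    exact w5_mul_ne _ _
  have := h a (LC (k + 2)) (RC (k + 2)) (by rw [LC_leaves]) (by rw [RC_leaves]) 1 1
  have heq : (fun i => a (permNat (1 : Equiv.Perm (Fin (k + 3))) i)) = a := by
    funext i; rw [permNat_one]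
  rw [heq, hlc, hrc] at this
  have := congrArg (fun x : W5.{v} => x.n.down) this
  simp [w5] at this

lemma noUlt5 : ¬ ∃ m, 3 ≤ m ∧ ACnice W5.{v} m := by
  rintro ⟨m, hm, hn⟩; exact notNice5 m hm hn

lemma sat2a : Satisfies W2.{v} (Brack.node (.node .leaf .leaf) .leaf) (Brack.node .leaf (.node .leaf .leaf)) ((1) : Equiv.Perm (Fin 3)) := by
  intro a
  rw [w2_eval, w2_eval]
  show a 0 = a (permNat ((1) : Equiv.Perm (Fin 3)) 0)
  rw [show permNat ((1) : Equiv.Perm (Fin 3)) 0 = 0 from by decide]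

lemma sat2b : Satisfies W2.{v} (Brack.node (.node .leaf .leaf) .leaf) (Brack.node .leaf (.node .leaf .leaf)) ((Equiv.swap 1 2) : Equiv.Perm (Fin 3)) := by
  intro a
  rw [w2_eval, w2_eval]
  show a 0 = a (permNat ((Equiv.swap 1 2) : Equiv.Perm (Fin 3)) 0)
  rw [show permNat ((Equiv.swap 1 2) : Equiv.Perm (Fin 3)) 0 = 0 from by decide]

lemma sat2c : Satisfies W2.{v} (Brack.node .leaf (.node .leaf .leaf)) (Brack.node (.node .leaf .leaf) .leaf) ((1) : Equiv.Perm (Fin 3)) := by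
  intro a
  rw [w2_eval, w2_eval]
  show a 0 = a (permNat ((1) : Equiv.Perm (Fin 3)) 0)
  rw [show permNat ((1) : Equiv.Perm (Fin 3)) 0 = 0 from by decide]

lemma sat2d : Satisfies W2.{v} (Brack.node .leaf (.node .leaf .leaf)) (Brack.node (.node .leaf .leaf) .leaf) ((Equiv.swap 1 2) : Equiv.Perm (Fin 3)) := by
  intro a
  rw [w2_eval, w2_eval]
  show a 0 = a (permNat ((Equiv.swap 1 2) : Equiv.Perm (Fin 3)) 0)
  rw [show permNat ((Equiv.swap 1 2) : Equiv.Perm (Fin 3)) 0 = 0 from by decide]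

lemma sat3a : Satisfies W3.{v} (Brack.node (.node .leaf .leaf) .leaf) (Brack.node .leaf (.node .leaf .leaf)) ((Equiv.swap 0 1) : Equiv.Perm (Fin 3)) := by
  intro a
  rw [w3_eval, w3_eval]
  show a 2 = a (permNat ((Equiv.swap 0 1) : Equiv.Perm (Fin 3)) 2)
  rw [show permNat ((Equiv.swap 0 1) : Equiv.Perm (Fin 3)) 2 = 2 from by decide]

lemma sat3b : Satisfies W3.{v} (Brack.node .leaf (.node .leaf .leaf)) (Brack.node (.node .leaf .leaf) .leaf) ((Equiv.swap 0 1) : Equiv.Perm (Fin 3)) := by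
  intro a
  rw [w3_eval, w3_eval]
  show a 2 = a (permNat ((Equiv.swap 0 1) : Equiv.Perm (Fin 3)) 2)
  rw [show permNat ((Equiv.swap 0 1) : Equiv.Perm (Fin 3)) 2 = 2 from by decide]

lemma sat1a : Satisfies W1.{v} (Brack.node (.node .leaf .leaf) .leaf) (Brack.node .leaf (.node .leaf .leaf)) ((Equiv.swap 0 2) : Equiv.Perm (Fin 3)) := by
  intro a
  simp only [Brack.eval, Brack.leaves]
  norm_num
  rw [show permNat (Equiv.swap 0 2 : Equiv.Perm (Fin 3)) 0 = 2 from by decide]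
  rw [show permNat (Equiv.swap 0 2 : Equiv.Perm (Fin 3)) 1 = 1 from by decide]
  rw [show permNat (Equiv.swap 0 2 : Equiv.Perm (Fin 3)) 2 = 0 from by decide]
  apply w1_ext
  simp only [w1_mul_down]
  ring

lemma sat1b : Satisfies W1.{v} (Brack.node (.node .leaf .leaf) .leaf) (Brack.node .leaf (.node .leaf .leaf)) (((finRotate 3)⁻¹) : Equiv.Perm (Fin 3)) := by
  intro a
  simp only [Brack.eval, Brack.leaves]
  norm_num
  rw [show permNat ((finRotate 3)⁻¹ : Equiv.Perm (Fin 3)) 0 = 2 from by decide]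
  rw [show permNat ((finRotate 3)⁻¹ : Equiv.Perm (Fin 3)) 1 = 0 from by decide]
  rw [show permNat ((finRotate 3)⁻¹ : Equiv.Perm (Fin 3)) 2 = 1 from by decide]
  apply w1_ext
  simp only [w1_mul_down]
  ring

lemma sat1c : Satisfies W1.{v} (Brack.node .leaf (.node .leaf .leaf)) (Brack.node (.node .leaf .leaf) .leaf) ((Equiv.swap 0 2) : Equiv.Perm (Fin 3)) := by
  intro a
  simp only [Brack.eval, Brack.leaves]
  norm_num
  rw [show permNat (Equiv.swap 0 2 : Equiv.Perm (Fin 3)) 0 = 2 from by decide]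
  rw [show permNat (Equiv.swap 0 2 : Equiv.Perm (Fin 3)) 1 = 1 from by decide]
  rw [show permNat (Equiv.swap 0 2 : Equiv.Perm (Fin 3)) 2 = 0 from by decide]
  apply w1_ext
  simp only [w1_mul_down]
  ring

lemma sat1d : Satisfies W1.{v} (Brack.node .leaf (.node .leaf .leaf)) (Brack.node (.node .leaf .leaf) .leaf) ((finRotate 3) : Equiv.Perm (Fin 3)) := by
  intro a
  simp only [Brack.eval, Brack.leaves]
  norm_num
  rw [show permNat (finRotate 3 : Equiv.Perm (Fin 3)) 0 = 1 from by decide]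
  rw [show permNat (finRotate 3 : Equiv.Perm (Fin 3)) 1 = 2 from by decide]
  rw [show permNat (finRotate 3 : Equiv.Perm (Fin 3)) 2 = 0 from by decide]
  apply w1_ext
  simp only [w1_mul_down]
  ring

lemma perm3_cases (f : Equiv.Perm (Fin 3)) :
    f = 1 ∨ f = Equiv.swap 0 1 ∨ f = Equiv.swap 0 2 ∨ f = Equiv.swap 1 2 ∨
      f = finRotate 3 ∨ f = (finRotate 3)⁻¹ := by
  revert f; decide


/-- Proposition 5.6: a nontrivial linear identity `⟨s,t,f⟩` of length `6` is ultimately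
AC-nice (every magma satisfying it is `m`AC-nice for some `m ≥ 3`) if and only if, up to
interchanging its two sides, it is `⟨L₃, R₃, f₀⟩`, the identity `(a₁a₂)a₃ = a₂(a₃a₁)`,
i.e. `(xy)z = y(zx)`.  Here `L₃ = (∘∘)∘`, `R₃ = ∘(∘∘)` and `f₀ = finRotate 3` is the
cycle `0 ↦ 1 ↦ 2 ↦ 0`. -/
theorem stmt11.{w} (s t : Brack) (hs : s.leaves = 3) (ht : t.leaves = 3)
    (f : Equiv.Perm (Fin 3)) (hnt : ¬(s = t ∧ f = 1)) :
    (∀ (G : Type w) [Mul G], Satisfies G s t f → ∃ m, 3 ≤ m ∧ ACnice G m) ↔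
      ((s = Brack.node (.node .leaf .leaf) .leaf ∧ t = Brack.node .leaf (.node .leaf .leaf) ∧
          f = finRotate 3) ∨
        (s = Brack.node .leaf (.node .leaf .leaf) ∧ t = Brack.node (.node .leaf .leaf) .leaf ∧
          f = (finRotate 3)⁻¹)) := by
  constructor
  · intro Hgood
    rcases cls3 s hs with rfl | rfl <;> rcases cls3 t ht with rfl | rfl <;>
      rcases perm3_cases f with rfl | rfl | rfl | rfl | rfl | rfl
    -- (L, L, *)
    · exact absurd ⟨rfl, rfl⟩ hnt
    · exact absurd (Hgood W4 (sat4 _)) noUlt4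
    · exact absurd (Hgood W4 (sat4 _)) noUlt4
    · exact absurd (Hgood W4 (sat4 _)) noUlt4
    · exact absurd (Hgood W4 (sat4 _)) noUlt4
    · exact absurd (Hgood W4 (sat4 _)) noUlt4
    -- (L, R, *)
    · exact absurd (Hgood W2 sat2a) noUlt2
    · exact absurd (Hgood W3 sat3a) noUlt3
    · exact absurd (Hgood W1 sat1a) noUlt1
    · exact absurd (Hgood W2 sat2b) noUlt2
    · exact Or.inl ⟨rfl, rfl, rfl⟩
    · exact absurd (Hgood W1 sat1b) noUlt1
    -- (R, L, *)
    · exact absurd (Hgood W2 sat2c) noUlt2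
    · exact absurd (Hgood W3 sat3b) noUlt3
    · exact absurd (Hgood W1 sat1c) noUlt1
    · exact absurd (Hgood W2 sat2d) noUlt2
    · exact absurd (Hgood W1 sat1d) noUlt1
    · exact Or.inr ⟨rfl, rfl, rfl⟩
    -- (R, R, *)
    · exact absurd ⟨rfl, rfl⟩ hnt
    · exact absurd (Hgood W5 (sat5 _)) noUlt5
    · exact absurd (Hgood W5 (sat5 _)) noUlt5
    · exact absurd (Hgood W5 (sat5 _)) noUlt5
    · exact absurd (Hgood W5 (sat5 _)) noUlt5
    · exact absurd (Hgood W5 (sat5 _)) noUlt5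
  · rintro (⟨rfl, rfl, rfl⟩ | ⟨rfl, rfl, rfl⟩) <;> intro G _ hsat
    · exact ⟨5, by norm_num, acnice5 (hmul_of_sat1 hsat)⟩
    · exact ⟨5, by norm_num, acnice5 (hmul_of_sat2 hsat)⟩
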